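/- Suppose u ∈ P(R) is minuscule and u = Σ_{i∈I} ℓ_i α_i with ℓ_i ≥ 0 for all i. Set u' := Σ_{i∈I} ℓ'_i α_i, where ℓ'_i := ℓ_i − ⌊ℓ_i⌋. Then there exists an element w ∈ W that is u'-minuscule and satisfies w(u') = u. -/

import Mathlib

/-!
Common setup: an abstract reduced irreducible crystallographic root system `R`
inside a real inner ℝ product space `E`, with simple roots `α i` (`i : ι`) forming
a basis of `E`, Weyl group generated by the reflections in the roots
(equivalently, by the simple reflections), coroot pairing
`⟨x, a∨⟩ = 2 (x, a) / (a, a)`, weight lattice `P(R)`, root lattices `Q(R)`,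
`Q(R_J)`, etc.
-/

open scoped BigOperators

noncomputable section

/-- the pairing `⟨x, a∨⟩ = 2 (x, a)/(a, a)` of `x` with the coroot of `a`. -/
def pairR {E : Type} [NormedAddCommGroup E] [InnerProductSpace ℝ E] (x a : E) : ℝ :=
  2 * (inner ℝ x a : ℝ) / (inner ℝ a a : ℝ)

/-- the reflection in (the hyperplane orthogonal to) `a`. -/
def reflFun {E : Type} [NormedAddCommGroup E] [InnerProductSpace ℝ E] (a : E) (x : E) : E :=
  x - pairR x a • a

/-- A reduced irreducible crystallographic root system in a real inner ℝ product
space `E`, whose set of simple roots `simple : ι → E` is a basis of `E`. -/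
structure RootSystemCtx (ι E : Type) [Fintype ι] [DecidableEq ι]
    [NormedAddCommGroup E] [InnerProductSpace ℝ E] : Type where
  Roots : Set E
  simple : ι → E
  simple_mem : ∀ i, simple i ∈ Roots
  finite : Roots.Finite
  ne_zero : ∀ a ∈ Roots, a ≠ 0
  reduced : ∀ a ∈ Roots, ∀ t : ℝ, t • a ∈ Roots → t = 1 ∨ t = -1
  crystal : ∀ a ∈ Roots, ∀ b ∈ Roots, ∃ n : ℤ, pairR a b = (n : ℝ)
  refl_stable : ∀ a ∈ Roots, ∀ b ∈ Roots, reflFun b a ∈ Roots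
  indep : LinearIndependent ℝ simple
  span_top : Submodule.span ℝ (Set.range simple) = ⊤
  pos_neg : ∀ a ∈ Roots, (∃ c : ι → ℕ, a = ∑ i, (c i : ℝ) • simple i) ∨
      (∃ c : ι → ℕ, a = -∑ i, (c i : ℝ) • simple i)
  irred : ∀ R1 R2 : Set E, Roots = R1 ∪ R2 →
      (∀ a ∈ R1, ∀ b ∈ R2, (inner ℝ a b : ℝ) = 0) → R1 = ∅ ∨ R2 = ∅

namespace RootSystemCtx

variable {ι E : Type} [Fintype ι] [DecidableEq ι]
  [NormedAddCommGroup E] [InnerProductSpace ℝ E]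
variable (S : RootSystemCtx ι E)

/-- `R` is simply laced: `⟨a, b∨⟩ ∈ {-1, 0, 1}` for roots `b ≠ ± a`. -/
def SimplyLaced : Prop :=
  ∀ a ∈ S.Roots, ∀ b ∈ S.Roots, b ≠ a → b ≠ -a →
    pairR a b = -1 ∨ pairR a b = 0 ∨ pairR a b = 1

/-- membership in the weight lattice `P(R)`. -/
def IsWeight (x : E) : Prop := ∀ a ∈ S.Roots, ∃ n : ℤ, pairR x a = (n : ℝ)

/-- `x` is dominant: `⟨x, αᵢ∨⟩ ≥ 0` for all simple roots. -/
def IsDominant (x : E) : Prop := ∀ i, 0 ≤ pairR x (S.simple i)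

/-- positive roots: roots that are nonnegative combinations of simple roots. -/
def IsPositiveRoot (a : E) : Prop :=
  a ∈ S.Roots ∧ ∃ c : ι → ℕ, a = ∑ i, (c i : ℝ) • S.simple i

/-- the root lattice `Q(R)`. -/
def rootLattice : AddSubgroup E := AddSubgroup.closure S.Roots

/-- the root lattice `Q(R_J)` of the sub-root system `R_J`. -/
def rootLatticeJ (J : Finset ι) : AddSubgroup E :=
  AddSubgroup.closure (S.simple '' ↑J)

/-- the sub-root system `R_J` determined by the simple roots `α_j`, `j ∈ J`. -/
def RootsJ (J : Finset ι) : Set E :=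
  {a | a ∈ S.Roots ∧ a ∈ Submodule.span ℝ (S.simple '' ↑J)}

/-- `x` is `J`-dominant. -/
def IsJDominant (J : Finset ι) (x : E) : Prop := ∀ j ∈ J, 0 ≤ pairR x (S.simple j)

/-- `x` is `J`-minuscule: `⟨x, a∨⟩ ∈ {-1,0,1}` for all `a ∈ R_J`. -/
def IsJMinuscule (J : Finset ι) (x : E) : Prop :=
  ∀ a ∈ S.RootsJ J, pairR x a = -1 ∨ pairR x a = 0 ∨ pairR x a = 1

/-- the action of a word `[i₁, …, i_t]` of simple reflections:
`s_{i₁} ∘ ⋯ ∘ s_{i_t}`. -/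
def wordAct (l : List ι) : E → E :=
  l.foldr (fun i f => reflFun (S.simple i) ∘ f) id

/-- membership in the Weyl group `W` (generated by the simple reflections). -/
def InWeyl (w : E → E) : Prop := ∃ l : List ι, S.wordAct l = w

/-- the Weyl group orbit `W x`. -/
def weylOrbit (x : E) : Set E := {y | ∃ l : List ι, y = S.wordAct l x}

/-- a word is reduced if no shorter word gives the same Weyl group element. -/
def IsReducedWord (l : List ι) : Prop :=
  ∀ l' : List ι, S.wordAct l' = S.wordAct l → l.length ≤ l'.length

/-- `w ∈ W` is `λ`-minuscule: some (equivalently, any) reduced expression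
`w = s_{i₁} ⋯ s_{i_t}` satisfies
`⟨s_{i_{r+1}} ⋯ s_{i_t} λ, α_{i_r}∨⟩ = -1` for all `1 ≤ r ≤ t`. -/
def IsMinusculeFor (lam : E) (w : E → E) : Prop :=
  ∃ l : List ι, S.wordAct l = w ∧ S.IsReducedWord l ∧
    ∀ r : Fin l.length,
      pairR (S.wordAct (l.drop (r + 1)) lam) (S.simple (l.get r)) = -1

/-- the basis of simple roots. -/
def simpleBasis : Module.Basis ι ℝ E := Module.Basis.mk S.indep S.span_top.ge

/-- `⟨x, ωᵢ⟩`: the pairing with the fundamental coweight `ωᵢ` dual to `αᵢ`,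
i.e. the `i`-th coordinate of `x` in the basis of simple roots. -/
def coweightPair (x : E) (i : ι) : ℝ := S.simpleBasis.repr x i

end RootSystemCtx

section PairLemmas

variable {E : Type} [NormedAddCommGroup E] [InnerProductSpace ℝ E]

lemma pairR_add_left (x y a : E) : pairR (x + y) a = pairR x a + pairR y a := by
  unfold pairR; rw [inner_add_left]; ring

lemma pairR_sub_left (x y a : E) : pairR (x - y) a = pairR x a - pairR y a := by
  unfold pairR; rw [inner_sub_left]; ring

lemma pairR_smul_left (c : ℝ) (x a : E) : pairR (c • x) a = c * pairR x a := by
  unfold pairR; rw [real_inner_smul_left]; ring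

lemma pairR_self {a : E} (ha : a ≠ 0) : pairR a a = 2 := by
  have h : (inner ℝ a a : ℝ) ≠ 0 := fun hc => ha ((@inner_self_eq_zero ℝ _ _ _ _ a).1 hc)
  unfold pairR
  field_simp

lemma inner_reflFun {a : E} (ha : a ≠ 0) (x y : E) :
    (inner ℝ (reflFun a x) (reflFun a y) : ℝ) = inner ℝ x y := by
  have h : (inner ℝ a a : ℝ) ≠ 0 := fun hc => ha ((@inner_self_eq_zero ℝ _ _ _ _ a).1 hc)
  unfold reflFun pairR
  rw [inner_sub_left, inner_sub_right, inner_sub_right, real_inner_smul_left,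
    real_inner_smul_right, real_inner_smul_right, real_inner_smul_left,
    real_inner_comm a y, real_inner_comm a x]
  field_simp
  ring

lemma pairR_reflFun_reflFun {a : E} (ha : a ≠ 0) (x y : E) :
    pairR (reflFun a x) (reflFun a y) = pairR x y := by
  unfold pairR
  rw [inner_reflFun ha, inner_reflFun ha]

lemma pairR_reflFun_self {a : E} (ha : a ≠ 0) (x : E) :
    pairR (reflFun a x) a = - pairR x a := by
  unfold reflFun
  rw [pairR_sub_left, pairR_smul_left, pairR_self ha]; ring

lemma reflFun_invol {a : E} (ha : a ≠ 0) (x : E) :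
    reflFun a (reflFun a x) = x := by
  have h := pairR_reflFun_self ha x
  show reflFun a x - pairR (reflFun a x) a • a = x
  rw [h]
  show x - pairR x a • a - (- pairR x a) • a = x
  rw [neg_smul, sub_neg_eq_add, sub_add_cancel]

lemma pairR_reflFun_left {a : E} (ha : a ≠ 0) (x b : E) :
    pairR (reflFun a x) b = pairR x (reflFun a b) := by
  conv_lhs => rw [← reflFun_invol ha b]
  rw [pairR_reflFun_reflFun ha]

end PairLemmas

section SLemmas

variable {ι E : Type} [Fintype ι] [DecidableEq ι]
  [NormedAddCommGroup E] [InnerProductSpace ℝ E]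
variable (S : RootSystemCtx ι E)

/-- `x` pairs with every root in `{-1,0,1}`. -/
def MinuP (x : E) : Prop :=
  ∀ a ∈ S.Roots, pairR x a = -1 ∨ pairR x a = 0 ∨ pairR x a = 1

lemma simple_ne_zero' (i : ι) : S.simple i ≠ 0 := S.ne_zero _ (S.simple_mem i)

lemma roots_refl {a : E} (ha : a ∈ S.Roots) (i : ι) :
    reflFun (S.simple i) a ∈ S.Roots :=
  S.refl_stable a ha _ (S.simple_mem i)

lemma minuP_refl {x : E} (h : MinuP S x) (i : ι) :
    MinuP S (reflFun (S.simple i) x) := by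
  intro a ha
  rw [pairR_reflFun_left (simple_ne_zero' S i)]
  exact h _ (roots_refl S ha i)

lemma isWeight_refl {x : E} (h : S.IsWeight x) (i : ι) :
    S.IsWeight (reflFun (S.simple i) x) := by
  intro a ha
  rw [pairR_reflFun_left (simple_ne_zero' S i)]
  exact h _ (roots_refl S ha i)

lemma wordAct_nil : S.wordAct ([] : List ι) = id := rfl

lemma wordAct_cons (i : ι) (l : List ι) :
    S.wordAct (i :: l) = reflFun (S.simple i) ∘ S.wordAct l := rfl

lemma minuP_wordAct {x : E} (h : MinuP S x) (l : List ι) :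
    MinuP S (S.wordAct l x) := by
  induction l with
  | nil => exact h
  | cons i t ih => exact minuP_refl S ih i

lemma wordAct_foldr_comp (l : List ι) (g : E → E) :
    l.foldr (fun i f => reflFun (S.simple i) ∘ f) g = S.wordAct l ∘ g := by
  induction l with
  | nil => rfl
  | cons i t ih =>
    show reflFun (S.simple i) ∘ (t.foldr _ g) = _
    rw [ih]; rfl

lemma wordAct_append (l₁ l₂ : List ι) :
    S.wordAct (l₁ ++ l₂) = S.wordAct l₁ ∘ S.wordAct l₂ := by
  unfold RootSystemCtx.wordAct
  rw [List.foldr_append]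
  exact wordAct_foldr_comp S l₁ _

lemma wordAct_reverse_apply (l : List ι) (x : E) :
    S.wordAct l.reverse (S.wordAct l x) = x := by
  induction l generalizing x with
  | nil => rfl
  | cons i t ih =>
    rw [List.reverse_cons, wordAct_append]
    show S.wordAct t.reverse (S.wordAct [i] (S.wordAct (i :: t) x)) = x
    have : S.wordAct [i] (S.wordAct (i :: t) x)
        = reflFun (S.simple i) (reflFun (S.simple i) (S.wordAct t x)) := rfl
    rw [this, reflFun_invol (simple_ne_zero' S i)]
    exact ih x

/-- height: sum of coordinates in the basis of simple roots. -/
def htS (x : E) : ℝ := ∑ i, S.simpleBasis.repr x i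

lemma htS_add (x y : E) : htS S (x + y) = htS S x + htS S y := by
  unfold htS
  rw [← Finset.sum_add_distrib]
  simp [map_add]

lemma htS_sub (x y : E) : htS S (x - y) = htS S x - htS S y := by
  unfold htS
  rw [← Finset.sum_sub_distrib]
  simp [map_sub]

lemma htS_smul (c : ℝ) (x : E) : htS S (c • x) = c * htS S x := by
  unfold htS
  rw [Finset.mul_sum]
  simp [map_smul]

lemma htS_simple (i : ι) : htS S (S.simple i) = 1 := by
  unfold htS
  have h1 : S.simple i = S.simpleBasis i := (Module.Basis.mk_apply _ _ _).symm
  rw [h1]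
  simp [Module.Basis.repr_self, Finsupp.single_apply]

lemma htS_reflFun (x : E) (i : ι) :
    htS S (reflFun (S.simple i) x) = htS S x - pairR x (S.simple i) := by
  show htS S (x - pairR x (S.simple i) • S.simple i) = _
  rw [htS_sub, htS_smul, htS_simple, mul_one]

lemma htS_wordAct_bound (l : List ι) (x : E) (hx : MinuP S x) :
    |htS S (S.wordAct l x) - htS S x| ≤ l.length := by
  induction l with
  | nil =>
    show |htS S x - htS S x| ≤ _
    simp
  | cons i t ih =>
    have hstep : S.wordAct (i :: t) x = reflFun (S.simple i) (S.wordAct t x) := rfl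
    have hp : |pairR (S.wordAct t x) (S.simple i)| ≤ 1 := by
      rcases minuP_wordAct S hx t _ (S.simple_mem i) with h | h | h <;> rw [h] <;> norm_num
    rw [hstep, htS_reflFun]
    have : htS S (S.wordAct t x) - pairR (S.wordAct t x) (S.simple i) - htS S x
        = (htS S (S.wordAct t x) - htS S x) - pairR (S.wordAct t x) (S.simple i) := by ring
    rw [this]
    calc |(htS S (S.wordAct t x) - htS S x) - pairR (S.wordAct t x) (S.simple i)|
        ≤ |htS S (S.wordAct t x) - htS S x| + |pairR (S.wordAct t x) (S.simple i)| :=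
          abs_sub _ _
      _ ≤ t.length + 1 := add_le_add ih hp
      _ = ((i :: t).length : ℝ) := by push_cast [List.length_cons]; ring

lemma htS_sum {κ : Type} (s : Finset κ) (g : κ → E) :
    htS S (∑ i ∈ s, g i) = ∑ i ∈ s, htS S (g i) := by
  unfold htS
  rw [map_sum]
  simp only [Finsupp.finset_sum_apply]
  exact Finset.sum_comm

end SLemmas


section CoreLemmas

variable {ι E : Type} [Fintype ι] [DecidableEq ι]
  [NormedAddCommGroup E] [InnerProductSpace ℝ E]
variable (S : RootSystemCtx ι E)

lemma comb_eq_zero {g : ι → ℝ} (h : ∑ i, g i • S.simple i = 0) : ∀ i, g i = 0 :=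
  Fintype.linearIndependent_iff.mp S.indep g h

lemma inner_self_pos' {a : E} (ha : a ≠ 0) : (0:ℝ) < inner ℝ a a :=
  lt_of_le_of_ne real_inner_self_nonneg (Ne.symm ((@inner_self_ne_zero ℝ _ _ _ _ a).mpr ha))

lemma inner_self_nonpos_eq_zero {a : E} (h : (inner ℝ a a : ℝ) ≤ 0) : a = 0 :=
  (@inner_self_eq_zero ℝ _ _ _ _ a).mp (le_antisymm h real_inner_self_nonneg)

lemma simple_inner_nonpos (hSL : S.SimplyLaced) {i j : ι} (hij : i ≠ j) :
    (inner ℝ (S.simple i) (S.simple j) : ℝ) ≤ 0 := by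
  by_contra hpos
  push_neg at hpos
  have hjj : (0:ℝ) < inner ℝ (S.simple j) (S.simple j) :=
    inner_self_pos' (simple_ne_zero' S j)
  have hp : 0 < pairR (S.simple i) (S.simple j) := by
    unfold pairR
    positivity
  have hne1 : S.simple j ≠ S.simple i := by
    intro hc
    have h0 : ∑ k, ((if k = j then (1:ℝ) else 0) - (if k = i then 1 else 0)) • S.simple k = 0 := by
      simp only [sub_smul, Finset.sum_sub_distrib, ite_smul, one_smul, zero_smul]
      rw [Finset.sum_ite_eq' Finset.univ j, Finset.sum_ite_eq' Finset.univ i]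
      simp [hc]
    have := comb_eq_zero S h0 j
    simp [hij.symm] at this
  have hne2 : S.simple j ≠ -S.simple i := by
    intro hc
    have h0 : ∑ k, ((if k = j then (1:ℝ) else 0) + (if k = i then 1 else 0)) • S.simple k = 0 := by
      simp only [add_smul, Finset.sum_add_distrib, ite_smul, one_smul, zero_smul]
      rw [Finset.sum_ite_eq' Finset.univ j, Finset.sum_ite_eq' Finset.univ i]
      simp only [Finset.mem_univ, if_true]
      rw [hc]; abel
    have := comb_eq_zero S h0 j
    simp [hij.symm] at this
  have h1 : pairR (S.simple i) (S.simple j) = 1 := by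
    rcases hSL (S.simple i) (S.simple_mem i) (S.simple j) (S.simple_mem j) hne1 hne2 with
      h | h | h
    · rw [h] at hp; norm_num at hp
    · rw [h] at hp; norm_num at hp
    · exact h
  have hroot : S.simple i - S.simple j ∈ S.Roots := by
    have := S.refl_stable (S.simple i) (S.simple_mem i) (S.simple j) (S.simple_mem j)
    unfold reflFun at this
    rwa [h1, one_smul] at this
  rcases S.pos_neg _ hroot with ⟨c, hc⟩ | ⟨c, hc⟩
  · have h0 : ∑ k, ((c k : ℝ) + (if k = j then 1 else 0) - (if k = i then 1 else 0)) • S.simple k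
        = 0 := by
      simp only [add_smul, sub_smul, Finset.sum_sub_distrib, Finset.sum_add_distrib, ite_smul,
        one_smul, zero_smul]
      rw [Finset.sum_ite_eq' Finset.univ j, Finset.sum_ite_eq' Finset.univ i]
      simp only [Finset.mem_univ, if_true]
      rw [← hc]; abel
    have := comb_eq_zero S h0 j
    simp only [if_pos rfl, if_neg hij.symm, if_true, sub_zero] at this
    have hcj : (c j : ℝ) = -1 := by linarith
    have : (0:ℝ) ≤ (c j : ℝ) := Nat.cast_nonneg _
    rw [hcj] at this; linarith
  · have h0 : ∑ k, ((c k : ℝ) + (if k = i then 1 else 0) - (if k = j then 1 else 0)) • S.simple k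
        = 0 := by
      simp only [add_smul, sub_smul, Finset.sum_sub_distrib, Finset.sum_add_distrib, ite_smul,
        one_smul, zero_smul]
      rw [Finset.sum_ite_eq' Finset.univ j, Finset.sum_ite_eq' Finset.univ i]
      simp only [Finset.mem_univ, if_true]
      have hc2 : ∑ k, (c k : ℝ) • S.simple k = S.simple j - S.simple i := by
        rw [← neg_sub (S.simple i) (S.simple j), hc, neg_neg]
      rw [hc2]; abel
    have := comb_eq_zero S h0 i
    simp only [if_pos rfl, if_neg hij, if_true, sub_zero] at this
    have hci : (c i : ℝ) = -1 := by linarith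
    have h2 : (0:ℝ) ≤ (c i : ℝ) := Nat.cast_nonneg _
    rw [hci] at h2; linarith

lemma inner_wordAct (l : List ι) (v w : E) :
    (inner ℝ (S.wordAct l v) (S.wordAct l w) : ℝ) = inner ℝ v w := by
  induction l with
  | nil => rfl
  | cons i t ih =>
    show (inner ℝ (reflFun (S.simple i) (S.wordAct t v)) (reflFun (S.simple i) (S.wordAct t w)) : ℝ) = _
    rw [inner_reflFun (simple_ne_zero' S i), ih]

lemma sum_update_sub (m : ι → ℕ) (j : ι) (hj : 1 ≤ m j) :
    (∑ i, ((Function.update m j (m j - 1)) i : ℝ) • S.simple i)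
      = (∑ i, (m i : ℝ) • S.simple i) - S.simple j := by
  have hterm : ∀ i, ((Function.update m j (m j - 1)) i : ℝ) • S.simple i
      = (m i : ℝ) • S.simple i - (if i = j then S.simple j else 0) := by
    intro i
    rcases eq_or_ne i j with rfl | h
    · rw [if_pos rfl, Function.update_self, Nat.cast_sub hj, Nat.cast_one, sub_smul, one_smul]
    · rw [if_neg h, Function.update_of_ne h, sub_zero]
  calc (∑ i, ((Function.update m j (m j - 1)) i : ℝ) • S.simple i)
      = (∑ i, (m i : ℝ) • S.simple i) - ∑ i, (if i = j then S.simple j else 0) := by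
        rw [← Finset.sum_sub_distrib]
        exact Finset.sum_congr rfl (fun i _ => hterm i)
    _ = _ := by rw [Finset.sum_ite_eq' Finset.univ j]; simp

lemma sum_update_add (m : ι → ℕ) (j : ι) :
    (∑ i, ((Function.update m j (m j + 1)) i : ℝ) • S.simple i)
      = (∑ i, (m i : ℝ) • S.simple i) + S.simple j := by
  have hterm : ∀ i, ((Function.update m j (m j + 1)) i : ℝ) • S.simple i
      = (m i : ℝ) • S.simple i + (if i = j then S.simple j else 0) := by
    intro i
    rcases eq_or_ne i j with rfl | h
    · rw [if_pos rfl, Function.update_self, Nat.cast_add, Nat.cast_one, add_smul, one_smul]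
    · rw [if_neg h, Function.update_of_ne h, add_zero]
  calc (∑ i, ((Function.update m j (m j + 1)) i : ℝ) • S.simple i)
      = (∑ i, (m i : ℝ) • S.simple i) + ∑ i, (if i = j then S.simple j else 0) := by
        rw [← Finset.sum_add_distrib]
        exact Finset.sum_congr rfl (fun i _ => hterm i)
    _ = _ := by rw [Finset.sum_ite_eq' Finset.univ j]; simp

lemma lemmaK (hSL : S.SimplyLaced) (f : ι → ℝ) (hf0 : ∀ i, 0 ≤ f i) (hf1 : ∀ i, f i < 1)
    (D : ι → ℕ) (j0 : ι) (hj0 : 1 ≤ D j0) (y : E)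
    (hy : (∑ i, f i • S.simple i) = y + ∑ i, (D i : ℝ) • S.simple i) :
    ∃ j, 1 ≤ D j ∧ (inner ℝ y (S.simple j) : ℝ) < 0 := by
  by_contra hcon
  push_neg at hcon
  set c : ι → ℝ := fun i => (D i : ℝ) - f i with hcdef
  set SD := Finset.univ.filter (fun j => 1 ≤ D j) with hSDdef
  have hj0mem : j0 ∈ SD := by rw [hSDdef]; simp [hj0]
  have hcpos : ∀ j ∈ SD, 0 < c j := by
    intro j hj
    rw [hSDdef] at hj
    simp only [Finset.mem_filter, Finset.mem_univ, true_and] at hj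
    have h1 : (1:ℝ) ≤ (D j : ℝ) := by exact_mod_cast hj
    have := hf1 j
    rw [hcdef]
    dsimp only
    linarith
  set v := ∑ i ∈ SD, c i • S.simple i with hvdef
  have hcy : (∑ i, c i • S.simple i) = -y := by
    have : ∀ i, c i • S.simple i = (D i : ℝ) • S.simple i - f i • S.simple i := by
      intro i; rw [hcdef]; dsimp only; rw [sub_smul]
    rw [Finset.sum_congr rfl (fun i _ => this i), Finset.sum_sub_distrib, hy]
    abel
  have hsplit : (∑ i, c i • S.simple i)
      = v + ∑ i ∈ Finset.univ.filter (fun j => ¬ 1 ≤ D j), c i • S.simple i := by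
    rw [hvdef, hSDdef]
    exact (Finset.sum_filter_add_sum_filter_not Finset.univ _ _).symm
  have hvj : ∀ j ∈ SD, (inner ℝ v (S.simple j) : ℝ) ≤ 0 := by
    intro j hj
    have hDj : 1 ≤ D j := by
      rw [hSDdef] at hj
      simpa using hj
    have hv_eq : v = -y - ∑ i ∈ Finset.univ.filter (fun j => ¬ 1 ≤ D j), c i • S.simple i := by
      rw [← hcy, hsplit]; abel
    rw [hv_eq, inner_sub_left, inner_neg_left, sum_inner]
    have hterm : ∀ i ∈ Finset.univ.filter (fun j => ¬ 1 ≤ D j),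
        (0:ℝ) ≤ inner ℝ (c i • S.simple i) (S.simple j) := by
      intro i hi
      simp only [Finset.mem_filter, Finset.mem_univ, true_and] at hi
      have hD0 : D i = 0 := by omega
      have hci : c i = -f i := by rw [hcdef]; dsimp only; rw [hD0]; simp
      have hij : i ≠ j := by
        intro hij; rw [hij] at hD0; omega
      rw [real_inner_smul_left, hci]
      have := simple_inner_nonpos S hSL hij
      have := hf0 i
      nlinarith
    have h2 : (0:ℝ) ≤ ∑ i ∈ Finset.univ.filter (fun j => ¬ 1 ≤ D j),
        (inner ℝ (c i • S.simple i) (S.simple j) : ℝ) :=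
      Finset.sum_nonneg hterm
    have h3 : (0:ℝ) ≤ inner ℝ y (S.simple j) := hcon j hDj
    linarith
  have hvv : (inner ℝ v v : ℝ) ≤ 0 := by
    nth_rewrite 1 [hvdef]
    rw [sum_inner]
    apply Finset.sum_nonpos
    intro j hj
    rw [real_inner_smul_left]
    have h1 := hvj j hj
    rw [real_inner_comm] at h1
    have h2 := hcpos j hj
    nlinarith
  have hv0 : v = 0 := inner_self_nonpos_eq_zero hvv
  have hite : ∑ i, (if 1 ≤ D i then c i else 0) • S.simple i = 0 := by
    rw [← hv0, hvdef, hSDdef]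
    rw [Finset.sum_filter]
    apply Finset.sum_congr rfl
    intro i _
    by_cases h : 1 ≤ D i <;> simp [h]
  have hz0 := comb_eq_zero S hite j0
  rw [if_pos hj0] at hz0
  have := hcpos j0 hj0mem
  rw [hz0] at this
  exact lt_irrefl 0 this

lemma raiseLemma (hSL : S.SimplyLaced) (f : ι → ℝ) (hf0 : ∀ i, 0 ≤ f i) (hf1 : ∀ i, f i < 1)
    (z : E) (hz : z = ∑ i, f i • S.simple i) :
    ∀ N : ℕ, ∀ D : ι → ℕ, (∑ i, D i) = N → ∀ y : E, MinuP S y →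
    z = y + ∑ i, (D i : ℝ) • S.simple i →
    ∃ l : List ι, S.wordAct l y = z := by
  intro N
  induction N with
  | zero =>
    intro D hDsum y _ hyz
    refine ⟨[], ?_⟩
    have hD0 : ∀ i ∈ Finset.univ, D i = 0 := Finset.sum_eq_zero_iff.mp hDsum
    have : (∑ i, (D i : ℝ) • S.simple i) = 0 :=
      Finset.sum_eq_zero (fun i hi => by rw [hD0 i hi]; simp)
    show y = z
    rw [hyz, this, add_zero]
  | succ N ih =>
    intro D hDsum y hymin hyz
    have hD : ∃ j0, 1 ≤ D j0 := by
      by_contra hcc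
      push_neg at hcc
      have h0 : (∑ i, D i) = 0 := Finset.sum_eq_zero (fun i _ => by have := hcc i; omega)
      omega
    obtain ⟨j0, hj0⟩ := hD
    obtain ⟨j, hDj, hyj⟩ := lemmaK S hSL f hf0 hf1 D j0 hj0 y (by rw [← hz]; exact (hz ▸ hyz))
    have hpj : pairR y (S.simple j) = -1 := by
      have hjj : (0:ℝ) < inner ℝ (S.simple j) (S.simple j) :=
        inner_self_pos' (simple_ne_zero' S j)
      have hneg : pairR y (S.simple j) < 0 := by
        unfold pairR
        apply div_neg_of_neg_of_pos _ hjj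
        linarith
      rcases hymin (S.simple j) (S.simple_mem j) with h | h | h
      · exact h
      · rw [h] at hneg; norm_num at hneg
      · rw [h] at hneg; norm_num at hneg
    set y' := reflFun (S.simple j) y with hy'def
    have hy'eq : y' = y + S.simple j := by
      rw [hy'def]
      show y - pairR y (S.simple j) • S.simple j = y + S.simple j
      rw [hpj]
      simp
    set D' := Function.update D j (D j - 1) with hD'def
    have hsum' : (∑ i, D' i) = N := by
      have hsplit : (∑ i, D i) = (∑ i ∈ Finset.univ \ {j}, D i) + D j :=
        Finset.sum_eq_sum_sdiff_singleton_add (Finset.mem_univ j) D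
      rw [hD'def, Finset.sum_update_of_mem (Finset.mem_univ j)]
      omega
    have hz' : z = y' + ∑ i, (D' i : ℝ) • S.simple i := by
      rw [hD'def, sum_update_sub S D j hDj, hy'eq, hyz]
      abel
    obtain ⟨l, hl⟩ := ih D' hsum' y' (minuP_refl S hymin j) hz'
    refine ⟨l ++ [j], ?_⟩
    rw [wordAct_append]
    show S.wordAct l (S.wordAct [j] y) = z
    have : S.wordAct [j] y = y' := rfl
    rw [this, hl]

lemma norm_reflFun {a : E} (ha : a ≠ 0) (v : E) : ‖reflFun a v‖ = ‖v‖ := by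
  have h2 : ‖reflFun a v‖ ^ 2 = ‖v‖ ^ 2 := by
    rw [← real_inner_self_eq_norm_sq, ← real_inner_self_eq_norm_sq, inner_reflFun ha]
  exact (sq_eq_sq₀ (norm_nonneg _) (norm_nonneg _)).mp h2

lemma norm_wordAct (l : List ι) (v : E) : ‖S.wordAct l v‖ = ‖v‖ := by
  induction l with
  | nil => rfl
  | cons i t ih =>
    show ‖reflFun (S.simple i) (S.wordAct t v)‖ = ‖v‖
    rw [norm_reflFun (simple_ne_zero' S i), ih]

/-- The height functional as a linear map. -/
def htL : E →ₗ[ℝ] ℝ where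
  toFun := htS S
  map_add' := htS_add S
  map_smul' := by
    intro c x
    simp only [RingHom.id_apply, smul_eq_mul]
    exact htS_smul S c x

lemma htS_bound : ∃ C : ℝ, 0 ≤ C ∧ ∀ v : E, |htS S v| ≤ C * ‖v‖ := by
  haveI : FiniteDimensional ℝ E := Module.Finite.of_basis S.simpleBasis
  refine ⟨‖LinearMap.toContinuousLinearMap (htL S)‖, norm_nonneg _, fun v => ?_⟩
  have h := (LinearMap.toContinuousLinearMap (htL S)).le_opNorm v
  rw [show (LinearMap.toContinuousLinearMap (htL S)) v = htS S v from rfl] at h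
  rwa [Real.norm_eq_abs] at h

lemma antidom (x : E) (hx : MinuP S x) :
    ∃ (y : E) (g : ι → ℕ) (l : List ι), MinuP S y ∧
      (∀ i, (inner ℝ y (S.simple i) : ℝ) ≤ 0) ∧
      x = y + ∑ i, (g i : ℝ) • S.simple i ∧ S.wordAct l x = y := by
  obtain ⟨C, hC0, hC⟩ := htS_bound S
  suffices h : ∀ n : ℕ, ∀ x : E, MinuP S x → Nat.floor (htS S x + C * ‖x‖) ≤ n →
      ∃ (y : E) (g : ι → ℕ) (l : List ι), MinuP S y ∧
        (∀ i, (inner ℝ y (S.simple i) : ℝ) ≤ 0) ∧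
        x = y + ∑ i, (g i : ℝ) • S.simple i ∧ S.wordAct l x = y by
    exact h _ x hx le_rfl
  have terminal : ∀ x : E, MinuP S x → (¬ ∃ i, pairR x (S.simple i) = 1) →
      ∃ (y : E) (g : ι → ℕ) (l : List ι), MinuP S y ∧
        (∀ i, (inner ℝ y (S.simple i) : ℝ) ≤ 0) ∧
        x = y + ∑ i, (g i : ℝ) • S.simple i ∧ S.wordAct l x = y := by
    intro x hx hex
    push_neg at hex
    refine ⟨x, fun _ => 0, [], hx, ?_, by simp, rfl⟩
    intro i
    have hp : pairR x (S.simple i) ≤ 0 := by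
      rcases hx (S.simple i) (S.simple_mem i) with h | h | h
      · rw [h]; norm_num
      · rw [h]
      · exact absurd h (hex i)
    have hii : (0:ℝ) < inner ℝ (S.simple i) (S.simple i) :=
      inner_self_pos' (simple_ne_zero' S i)
    have heq : (inner ℝ x (S.simple i) : ℝ)
        = pairR x (S.simple i) * (inner ℝ (S.simple i) (S.simple i)) / 2 := by
      unfold pairR
      field_simp
    rw [heq]
    have : pairR x (S.simple i) * (inner ℝ (S.simple i) (S.simple i) : ℝ) ≤ 0 :=
      mul_nonpos_of_nonpos_of_nonneg hp (le_of_lt hii)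
    linarith
  have descendStep : ∀ x : E, ∀ i : ι, pairR x (S.simple i) = 1 →
      Nat.floor (htS S (reflFun (S.simple i) x) + C * ‖reflFun (S.simple i) x‖)
        < Nat.floor (htS S x + C * ‖x‖) := by
    intro x i hpi
    set x' := reflFun (S.simple i) x with hx'def
    have hnorm : ‖x'‖ = ‖x‖ := norm_reflFun (simple_ne_zero' S i) x
    have hht : htS S x' = htS S x - 1 := by
      rw [hx'def, htS_reflFun, hpi]
    have hub : |htS S x'| ≤ C * ‖x'‖ := hC x'
    have h0' : 0 ≤ htS S x' + C * ‖x'‖ := by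
      rcases abs_le.mp hub with ⟨h1, _⟩
      linarith
    have hval : htS S x' + C * ‖x'‖ = (htS S x + C * ‖x‖) - 1 := by
      rw [hht, hnorm]; ring
    have h1 : (Nat.floor (htS S x' + C * ‖x'‖) : ℝ) ≤ (htS S x + C * ‖x‖) - 1 := by
      rw [← hval]
      exact Nat.floor_le h0'
    have h2 : (htS S x + C * ‖x‖) < Nat.floor (htS S x + C * ‖x‖) + 1 :=
      Nat.lt_floor_add_one _
    have : (Nat.floor (htS S x' + C * ‖x'‖) : ℝ) < Nat.floor (htS S x + C * ‖x‖) := by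
      linarith
    exact_mod_cast this
  intro n
  induction n with
  | zero =>
    intro x hx hbound
    by_cases hex : ∃ i, pairR x (S.simple i) = 1
    · obtain ⟨i, hi⟩ := hex
      have := descendStep x i hi
      omega
    · exact terminal x hx hex
  | succ n ih =>
    intro x hx hbound
    by_cases hex : ∃ i, pairR x (S.simple i) = 1
    · obtain ⟨i, hi⟩ := hex
      have hlt := descendStep x i hi
      set x' := reflFun (S.simple i) x with hx'def
      have hx'min : MinuP S x' := minuP_refl S hx i
      obtain ⟨y, g, l, hymin, hyneg, hxy, hword⟩ := ih x' hx'min (by omega)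
      refine ⟨y, Function.update g i (g i + 1), l ++ [i], hymin, hyneg, ?_, ?_⟩
      · have hxx' : x = x' + S.simple i := by
          rw [hx'def]
          show x = (x - pairR x (S.simple i) • S.simple i) + S.simple i
          rw [hi, one_smul]
          abel
        rw [hxx', hxy, sum_update_add S g i]
        abel
      · rw [wordAct_append]
        show S.wordAct l (S.wordAct [i] x) = y
        have : S.wordAct [i] x = x' := rfl
        rw [this, hword]
    · exact terminal x hx hex

lemma repr_comb (c : ι → ℝ) (j : ι) :
    S.simpleBasis.repr (∑ i, c i • S.simple i) j = c j := by
  have hb : (∑ i, c i • S.simple i) = ∑ i, c i • S.simpleBasis i := by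
    apply Finset.sum_congr rfl
    intro i _
    congr 1
    exact (Module.Basis.mk_apply S.indep S.span_top.ge i).symm
  rw [hb, map_sum, Finsupp.finset_sum_apply]
  have hterm : ∀ i, (S.simpleBasis.repr (c i • S.simpleBasis i)) j
      = c i * (if i = j then 1 else 0) := by
    intro i
    rw [map_smul, Module.Basis.repr_self]
    rw [Finsupp.smul_apply, Finsupp.single_apply, smul_eq_mul]
  rw [Finset.sum_congr rfl (fun i _ => hterm i)]
  rw [Finset.sum_congr rfl (fun i _ => mul_ite (i = j) (c i) (1:ℝ) 0)]
  simp [Finset.sum_ite_eq' Finset.univ j]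

lemma antidom_coords_nonpos (hSL : S.SimplyLaced) (y : E)
    (hy : ∀ i, (inner ℝ y (S.simple i) : ℝ) ≤ 0) (i : ι) :
    S.simpleBasis.repr y i ≤ 0 := by
  set b : ι → ℝ := fun k => S.simpleBasis.repr y k with hbdef
  have hyb : y = ∑ k, b k • S.simple k := by
    have h1 := S.simpleBasis.sum_repr y
    rw [← h1]
    apply Finset.sum_congr rfl
    intro k _
    congr 1
    exact Module.Basis.mk_apply S.indep S.span_top.ge k
  set bp : ι → ℝ := fun k => max (b k) 0 with hbpdef
  set bm : ι → ℝ := fun k => max (-(b k)) 0 with hbmdef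
  have hbp0 : ∀ k, 0 ≤ bp k := fun k => le_max_right _ _
  have hbm0 : ∀ k, 0 ≤ bm k := fun k => le_max_right _ _
  have hbpm : ∀ k, b k = bp k - bm k := by
    intro k
    rcases le_total 0 (b k) with h | h
    · rw [hbpdef, hbmdef]
      dsimp only
      rw [max_eq_left h, max_eq_right (neg_nonpos.mpr h), sub_zero]
    · rw [hbpdef, hbmdef]
      dsimp only
      rw [max_eq_right h, max_eq_left (neg_nonneg.mpr h)]
      ring
  have hmul0 : ∀ k, bp k * bm k = 0 := by
    intro k
    rcases le_total 0 (b k) with h | h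
    · rw [hbmdef]; dsimp only; rw [max_eq_right (neg_nonpos.mpr h), mul_zero]
    · rw [hbpdef]; dsimp only; rw [max_eq_right h, zero_mul]
  set vp := ∑ k, bp k • S.simple k with hvpdef
  set vm := ∑ k, bm k • S.simple k with hvmdef
  have hyv : y = vp - vm := by
    rw [hyb, hvpdef, hvmdef, ← Finset.sum_sub_distrib]
    apply Finset.sum_congr rfl
    intro k _
    rw [hbpm k, sub_smul]
  have h1 : (inner ℝ vp y : ℝ) ≤ 0 := by
    rw [hvpdef, sum_inner]
    apply Finset.sum_nonpos
    intro k _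
    rw [real_inner_smul_left]
    have := hy k
    rw [← real_inner_comm y (S.simple k)] at this
    exact mul_nonpos_of_nonneg_of_nonpos (hbp0 k) this
  have h2 : (inner ℝ vp vm : ℝ) ≤ 0 := by
    rw [hvpdef, sum_inner]
    apply Finset.sum_nonpos
    intro k _
    rw [real_inner_smul_left]
    rcases le_total (b k) 0 with h | h
    · have hbpk : bp k = 0 := by rw [hbpdef]; dsimp only; rw [max_eq_right h]
      rw [hbpk, zero_mul]
    · have hbmk : bm k = 0 := by rw [hbmdef]; dsimp only; rw [max_eq_right (neg_nonpos.mpr h)]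
      have hin : (inner ℝ (S.simple k) vm : ℝ) ≤ 0 := by
        rw [hvmdef, inner_sum]
        apply Finset.sum_nonpos
        intro j _
        rw [real_inner_smul_right]
        rcases eq_or_ne j k with rfl | hjk
        · rw [hbmk, zero_mul]
        · exact mul_nonpos_of_nonneg_of_nonpos (hbm0 j)
            (by rw [real_inner_comm]; exact simple_inner_nonpos S hSL hjk)
      exact mul_nonpos_of_nonneg_of_nonpos (hbp0 k) hin
  have h3 : (inner ℝ vp vp : ℝ) ≤ 0 := by
    have heq : (inner ℝ vp vp : ℝ) = inner ℝ vp y + inner ℝ vp vm := by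
      rw [hyv, inner_sub_right]
      ring
    rw [heq]
    linarith
  have hvp0 : vp = 0 := inner_self_nonpos_eq_zero h3
  have hcomb := comb_eq_zero S (hvpdef ▸ hvp0) i
  have : max (b i) 0 = 0 := hcomb
  have hle : b i ≤ max (b i) 0 := le_max_left _ _
  rw [this] at hle
  exact hle

end CoreLemmas

section Chain

variable {ι E : Type} [Fintype ι] [DecidableEq ι]
  [NormedAddCommGroup E] [InnerProductSpace ℝ E]
variable (S : RootSystemCtx ι E)

/-- The combinatorial core: a minuscule weight whose coordinates dominate the
box vector `z` (coordinates in `[0,1)`) by a nonzero `ℕ`-combination of simple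
roots admits a simple root that can be subtracted. -/
lemma coreStep (hSL : S.SimplyLaced) (f : ι → ℝ) (hf0 : ∀ i, 0 ≤ f i) (hf1 : ∀ i, f i < 1)
    (z : E) (hz : z = ∑ i, f i • S.simple i)
    (x : E) (hmin : MinuP S x)
    (m : ι → ℕ) (hx : x = z + ∑ i, (m i : ℝ) • S.simple i)
    (hm : ∃ i, 1 ≤ m i) :
    ∃ j, 1 ≤ m j ∧ pairR x (S.simple j) = 1 := by
  obtain ⟨y, g, l, hymin, hyneg, hxy, hword⟩ := antidom S x hmin
  have hb := antidom_coords_nonpos S hSL y hyneg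
  have hzy : z = y + ∑ i, ((g i : ℝ) - (m i : ℝ)) • S.simple i := by
    have h1 : z = x - ∑ i, (m i : ℝ) • S.simple i := by rw [hx]; abel
    rw [h1, hxy]
    rw [show (∑ i, ((g i : ℝ) - (m i : ℝ)) • S.simple i)
        = (∑ i, (g i : ℝ) • S.simple i) - ∑ i, (m i : ℝ) • S.simple i by
      rw [← Finset.sum_sub_distrib]
      exact Finset.sum_congr rfl (fun i _ => sub_smul _ _ _)]
    abel
  have hreprz : ∀ i, S.simpleBasis.repr z i = f i := by
    intro i; rw [hz]; exact repr_comb S f i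
  have hrepr2 : ∀ i, S.simpleBasis.repr z i
      = S.simpleBasis.repr y i + ((g i : ℝ) - (m i : ℝ)) := by
    intro i
    rw [hzy, map_add, Finsupp.add_apply, repr_comb]
  have hei : ∀ i, (m i : ℝ) ≤ (g i : ℝ) := by
    intro i
    have h1 := hrepr2 i
    rw [hreprz i] at h1
    have h2 := hb i
    have h3 := hf0 i
    linarith
  have hmg : ∀ i, m i ≤ g i := fun i => by exact_mod_cast hei i
  set D := fun i => g i - m i with hDdef
  have hDcast : ∀ i, (D i : ℝ) = (g i : ℝ) - (m i : ℝ) := by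
    intro i
    rw [hDdef]
    push_cast [Nat.cast_sub (hmg i)]
    ring
  have hzyD : z = y + ∑ i, (D i : ℝ) • S.simple i := by
    rw [hzy]
    congr 1
    exact Finset.sum_congr rfl (fun i _ => by rw [hDcast i])
  obtain ⟨l2, hl2⟩ := raiseLemma S hSL f hf0 hf1 z hz (∑ i, D i) D rfl y hymin hzyD
  have hzz : (inner ℝ z z : ℝ) = inner ℝ y y := by rw [← hl2, inner_wordAct]
  have hyy : (inner ℝ y y : ℝ) = inner ℝ x x := by rw [← hword, inner_wordAct]
  set d := ∑ i, (m i : ℝ) • S.simple i with hddef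
  have hxx : (inner ℝ x x : ℝ) = inner ℝ z z + 2 * (inner ℝ z d) + inner ℝ d d := by
    rw [hx]
    exact real_inner_add_add_self z d
  have hzd : 2 * (inner ℝ z d : ℝ) + inner ℝ d d = 0 := by
    have h1 : (inner ℝ z z : ℝ) = inner ℝ x x := hzz.trans hyy
    linarith
  have hdd : (0:ℝ) < inner ℝ d d := by
    apply inner_self_pos'
    intro hc
    obtain ⟨j0, hj0⟩ := hm
    have h0 := comb_eq_zero S (hddef ▸ hc) j0
    have : (1:ℝ) ≤ (m j0 : ℝ) := by exact_mod_cast hj0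
    rw [h0] at this
    linarith
  have hxd : (0:ℝ) < inner ℝ x d := by
    have h1 : (inner ℝ x d : ℝ) = inner ℝ z d + inner ℝ d d := by
      rw [hx, inner_add_left]
    linarith
  have hsum : (inner ℝ x d : ℝ) = ∑ i, (m i : ℝ) * (inner ℝ x (S.simple i) : ℝ) := by
    rw [hddef, inner_sum]
    exact Finset.sum_congr rfl (fun i _ => real_inner_smul_right x (S.simple i) ((m i : ℝ)))
  have hex : ∃ i, 0 < (m i : ℝ) * (inner ℝ x (S.simple i) : ℝ) := by
    by_contra hc
    push_neg at hc
    have : (inner ℝ x d : ℝ) ≤ 0 := by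
      rw [hsum]
      exact Finset.sum_nonpos (fun i _ => hc i)
    linarith
  obtain ⟨j, hj⟩ := hex
  have hmj : 1 ≤ m j := by
    by_contra h
    have h0 : m j = 0 := by omega
    rw [h0] at hj
    norm_num at hj
  have hinnerpos : 0 < (inner ℝ x (S.simple j) : ℝ) := by
    have hmj' : (0:ℝ) < m j := by exact_mod_cast hmj
    nlinarith
  have hpj : 0 < pairR x (S.simple j) := by
    unfold pairR
    have hjj : (0:ℝ) < inner ℝ (S.simple j) (S.simple j) :=
      inner_self_pos' (simple_ne_zero' S j)
    positivity
  refine ⟨j, hmj, ?_⟩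
  rcases hmin (S.simple j) (S.simple_mem j) with h | h | h
  · rw [h] at hpj; norm_num at hpj
  · rw [h] at hpj; norm_num at hpj
  · exact h

lemma chainLemma (hSL : S.SimplyLaced) (f : ι → ℝ) (hf0 : ∀ i, 0 ≤ f i) (hf1 : ∀ i, f i < 1)
    (z : E) (hz : z = ∑ i, f i • S.simple i) :
    ∀ n : ℕ, ∀ m : ι → ℕ, (∑ i, m i) = n → ∀ x : E, S.IsWeight x → MinuP S x →
    x = z + ∑ i, (m i : ℝ) • S.simple i →
    ∃ l : List ι, S.wordAct l z = x ∧ l.length = n ∧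
      ∀ r : Fin l.length,
        pairR (S.wordAct (l.drop (r + 1)) z) (S.simple (l.get r)) = -1 := by
  intro n
  induction n with
  | zero =>
    intro m hmsum x _ _ hx
    refine ⟨[], ?_, rfl, fun r => absurd r.2 (by simp)⟩
    have hm0 : ∀ i ∈ Finset.univ, m i = 0 := by
      intro i _
      exact Finset.sum_eq_zero_iff.mp hmsum i (Finset.mem_univ i)
    have : (∑ i, (m i : ℝ) • S.simple i) = 0 := by
      apply Finset.sum_eq_zero
      intro i hi
      rw [hm0 i hi]; simp
    show z = x
    rw [hx, this, add_zero]
  | succ n ih =>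
    intro m hmsum x hW hmin hx
    have hm : ∃ i, 1 ≤ m i := by
      by_contra hc
      push_neg at hc
      have h0 : (∑ i, m i) = 0 := Finset.sum_eq_zero (fun i _ => by have := hc i; omega)
      omega
    obtain ⟨j, hj1, hjp⟩ := coreStep S hSL f hf0 hf1 z hz x hmin m hx hm
    -- x' = s_j x = x - α_j
    set x' := reflFun (S.simple j) x with hx'def
    have hx'eq : x' = x - S.simple j := by
      rw [hx'def]
      show x - pairR x (S.simple j) • S.simple j = x - S.simple j
      rw [hjp, one_smul]
    set m' := Function.update m j (m j - 1) with hm'def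
    have hsplit : (∑ i, m i) = (∑ i ∈ Finset.univ \ {j}, m i) + m j :=
      Finset.sum_eq_sum_sdiff_singleton_add (Finset.mem_univ j) m
    have hsum' : (∑ i, m' i) = n := by
      rw [hm'def, Finset.sum_update_of_mem (Finset.mem_univ j)]
      omega
    have hterm : ∀ i, (m' i : ℝ) • S.simple i
        = (m i : ℝ) • S.simple i - (if i = j then S.simple j else 0) := by
      intro i
      rcases eq_or_ne i j with rfl | h
      · rw [hm'def, if_pos rfl]
        rw [Function.update_self]
        rw [Nat.cast_sub hj1, Nat.cast_one, sub_smul, one_smul]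
      · rw [hm'def, if_neg h, Function.update_of_ne h, sub_zero]
    have hx'sum : x' = z + ∑ i, (m' i : ℝ) • S.simple i := by
      rw [hx'eq, hx]
      have h1 : (∑ i, (m' i : ℝ) • S.simple i)
          = (∑ i, (m i : ℝ) • S.simple i) - ∑ i, (if i = j then S.simple j else 0) := by
        rw [← Finset.sum_sub_distrib]
        exact Finset.sum_congr rfl (fun i _ => hterm i)
      have h2 : (∑ i, (if i = j then S.simple j else 0)) = S.simple j := by
        simp
      rw [h1, h2]
      abel
    obtain ⟨l', hl'act, hl'len, hl'cond⟩ :=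
      ih m' hsum' x' (isWeight_refl S hW j) (minuP_refl S hmin j) hx'sum
    refine ⟨j :: l', ?_, by simp [hl'len], ?_⟩
    · show reflFun (S.simple j) (S.wordAct l' z) = x
      rw [hl'act, hx'def, reflFun_invol (simple_ne_zero' S j)]
    · rintro ⟨rv, hr⟩
      match rv, hr with
      | 0, hr =>
        show pairR (S.wordAct l' z) (S.simple j) = -1
        rw [hl'act]
        rw [hx'eq, pairR_sub_left, hjp, pairR_self (simple_ne_zero' S j)]
        norm_num
      | (k+1), hr =>
        have hk : k < l'.length := by simpa using hr
        exact hl'cond ⟨k, hk⟩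

end Chain

/-- Lemma on fractional parts, simply-laced case. Suppose
`u ∈ P(R)` is minuscule and `u = ∑_{i∈I} ℓ_i α_i` with `ℓ_i ≥ 0` for all `i`.
Set `u' := ∑_{i∈I} ℓ'_i α_i` where `ℓ'_i = ℓ_i - ⌊ℓ_i⌋`. Then there is a
`u'`-minuscule Weyl group element `w` with `w(u') = u`. -/
theorem fractional_part_in_weyl_orbit
    {ι E : Type} [Fintype ι] [DecidableEq ι]
    [NormedAddCommGroup E] [InnerProductSpace ℝ E]
    (S : RootSystemCtx ι E) (hSL : S.SimplyLaced)
    (u : E) (huW : S.IsWeight u)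
    (humin : ∀ a ∈ S.Roots, pairR u a = -1 ∨ pairR u a = 0 ∨ pairR u a = 1)
    (ℓ : ι → ℝ) (hℓ : ∀ i, 0 ≤ ℓ i) (hu : u = ∑ i, ℓ i • S.simple i)
    (u' : E) (hu' : u' = ∑ i, Int.fract (ℓ i) • S.simple i) :
    ∃ w : E → E, S.IsMinusculeFor u' w ∧ w u' = u := by
  classical
  set m : ι → ℕ := fun i => (⌊ℓ i⌋).toNat with hmdef
  have hf0 : ∀ i, (0:ℝ) ≤ Int.fract (ℓ i) := fun i => Int.fract_nonneg _
  have hf1 : ∀ i, Int.fract (ℓ i) < 1 := fun i => Int.fract_lt_one _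
  have hcast : ∀ i, ((m i : ℕ) : ℝ) = ((⌊ℓ i⌋ : ℤ) : ℝ) := by
    intro i
    have h1 : ((m i : ℕ) : ℤ) = ⌊ℓ i⌋ := Int.toNat_of_nonneg (Int.floor_nonneg.mpr (hℓ i))
    exact_mod_cast congrArg (fun (t : ℤ) => (t : ℝ)) h1
  have hxsum : u = u' + ∑ i, (m i : ℝ) • S.simple i := by
    rw [hu, hu', ← Finset.sum_add_distrib]
    apply Finset.sum_congr rfl
    intro i _
    rw [← add_smul]
    congr 1
    rw [hcast i]
    exact (Int.fract_add_floor (ℓ i)).symm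
  obtain ⟨l, hlact, hllen, hlcond⟩ :=
    chainLemma S hSL (fun i => Int.fract (ℓ i)) hf0 hf1 u' hu' (∑ i, m i) m rfl u huW humin hxsum
  have hMu' : MinuP S u' := by
    have h1 : u' = S.wordAct l.reverse u := by
      rw [← hlact, wordAct_reverse_apply]
    rw [h1]; exact minuP_wordAct S humin l.reverse
  have hdiff : htS S u - htS S u' = ((∑ i, m i : ℕ) : ℝ) := by
    have hsub : u - u' = ∑ i, (m i : ℝ) • S.simple i := by rw [hxsum]; abel
    calc htS S u - htS S u' = htS S (u - u') := (htS_sub S u u').symm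
      _ = ∑ i, htS S ((m i : ℝ) • S.simple i) := by rw [hsub, htS_sum]
      _ = ∑ i, (m i : ℝ) := by
          apply Finset.sum_congr rfl
          intro i _
          rw [htS_smul, htS_simple, mul_one]
      _ = ((∑ i, m i : ℕ) : ℝ) := by push_cast; rfl
  refine ⟨S.wordAct l, ⟨l, rfl, ?_, hlcond⟩, hlact⟩
  intro l' hl'
  have hact' : S.wordAct l' u' = u := by rw [hl', hlact]
  have hb := htS_wordAct_bound S l' u' hMu'
  rw [hact', hdiff] at hb
  have hle : ((∑ i, m i : ℕ) : ℝ) ≤ (l'.length : ℝ) := by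
    calc ((∑ i, m i : ℕ) : ℝ) = |((∑ i, m i : ℕ) : ℝ)| := (abs_of_nonneg (by positivity)).symm
      _ ≤ (l'.length : ℝ) := hb
  rw [hllen]
  exact_mod_cast hle
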